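/- Let Q be a stacked query matrix over 𝔽 with M column blocks and let ℐ̄ ⊆ [1:M]\{m} with complement ℐ. If for all i ≠ j the row spaces of Q_i[ℐ] and Q_j[ℐ] intersect trivially pairwise and jointly (rank Q₁:S[ℐ] = Σ_j rank Q_j[ℐ]), then for messages with W_{ℐ̄} known, the responses X₁,…,X_S (as random variables in the uniform message model over 𝔽_q) are such that no response X_j is a deterministic function of another response X_i together with W_{ℐ̄}, unless Q_j[ℐ] = 0; formally, for any matrices A, B with X_j = A·X_i + B·W_{ℐ̄} for all messages, it must be that Q_j[ℐ] = A·Q_i[ℐ] and rank condition forces Q_j[ℐ]'s rows to lie in the row space of Q_i[ℐ], hence Q_j[ℐ] = 0. -/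

import Mathlib

open Matrix Module

private lemma aux_finrank_sup_le {𝔽 V : Type*} [Field 𝔽] [AddCommGroup V] [Module 𝔽 V]
    [FiniteDimensional 𝔽 V] (s t : Submodule 𝔽 V) :
    finrank 𝔽 ↥(s ⊔ t) ≤ finrank 𝔽 s + finrank 𝔽 t := by
  rw [← Submodule.finrank_sup_add_finrank_inf_eq s t]
  exact Nat.le_add_right _ _

private lemma aux_finrank_iSup_le {𝔽 V : Type*} [Field 𝔽] [AddCommGroup V] [Module 𝔽 V]
    [FiniteDimensional 𝔽 V] {ι : Type*} [Fintype ι] [DecidableEq ι]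
    (U : ι → Submodule 𝔽 V) :
    finrank 𝔽 ↥(⨆ j, U j) ≤ ∑ j, finrank 𝔽 (U j) := by
  have h0 : (⨆ j, U j) = Finset.univ.sup U := by
    rw [Finset.sup_eq_iSup]; simp
  rw [h0]
  induction (Finset.univ : Finset ι) using Finset.induction_on with
  | empty => simp
  | insert _ _ ha ih =>
    rw [Finset.sup_insert, Finset.sum_insert ha]
    exact (aux_finrank_sup_le _ _).trans (Nat.add_le_add_left ih _)

theorem capacity_block_independence
    {𝔽 : Type*} [Field 𝔽] (S r M L : ℕ) (m : Fin M)
    (Q : Fin S → Matrix (Fin r) (Fin M × Fin L) 𝔽)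
    (IB : Finset (Fin M)) (hm : m ∉ IB)
    (QI : Fin S → Matrix (Fin r) {c : Fin M × Fin L // c.1 ∉ IB} 𝔽)
    (QIb : Fin S → Matrix (Fin r) {c : Fin M × Fin L // c.1 ∈ IB} 𝔽)
    (hQI : ∀ j, QI j = (Q j).submatrix id Subtype.val)
    (hQIb : ∀ j, QIb j = (Q j).submatrix id Subtype.val)
    (hrank : (Matrix.of fun (p : Fin S × Fin r) c => QI p.1 p.2 c).rank
      = ∑ j : Fin S, (QI j).rank) :
    ∀ i j : Fin S, i ≠ j →
      ∀ (A : Matrix (Fin r) (Fin r) 𝔽)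
        (B : Matrix (Fin r) {c : Fin M × Fin L // c.1 ∈ IB} 𝔽),
      (∀ (WI : {c : Fin M × Fin L // c.1 ∉ IB} → 𝔽)
         (WIb : {c : Fin M × Fin L // c.1 ∈ IB} → 𝔽),
        (QI j).mulVec WI + (QIb j).mulVec WIb
          = A.mulVec ((QI i).mulVec WI + (QIb i).mulVec WIb) + B.mulVec WIb) →
      QI j = A * QI i ∧ QI j = 0 := by
  classical
  intro i j hij A B hfun
  -- Step 1: QI j = A * QI i
  have hAQ : QI j = A * QI i := by
    ext k c
    have h := hfun (Pi.single c 1) 0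
    simp only [Matrix.mulVec_zero, add_zero] at h
    have := congrFun h k
    have h2 : (A * QI i) k c = (A *ᵥ (QI i).col c) k := by
      simp [Matrix.mul_apply, Matrix.mulVec, dotProduct, Matrix.col_apply]
    rw [h2]
    simpa [Matrix.mulVec_single, ← Matrix.mulVec_mulVec] using this
  refine ⟨hAQ, ?_⟩
  -- Row spaces
  set V : Fin S → Submodule 𝔽 ({c : Fin M × Fin L // c.1 ∉ IB} → 𝔽) :=
    fun j => LinearMap.range (QI j)ᵀ.mulVecLin with hV
  have hVrank : ∀ j, (QI j).rank = finrank 𝔽 (V j) := fun j => by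
    rw [← Matrix.rank_transpose]; rfl
  -- rank of the stacked matrix equals finrank of the sup of row spaces
  set N : Matrix (Fin S × Fin r) {c : Fin M × Fin L // c.1 ∉ IB} 𝔽 :=
    Matrix.of fun (p : Fin S × Fin r) c => QI p.1 p.2 c with hN
  have hrange : LinearMap.range Nᵀ.mulVecLin = ⨆ k, V k := by
    apply le_antisymm
    · rintro x ⟨v, rfl⟩
      have : Nᵀ.mulVec v = ∑ k : Fin S, (QI k)ᵀ.mulVec (fun a => v (k, a)) := by
        ext c
        simp only [Matrix.mulVec, dotProduct, Matrix.transpose_apply, Finset.sum_apply]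
        rw [Fintype.sum_prod_type]
        rfl
      rw [Matrix.mulVecLin_apply, this]
      exact Submodule.sum_mem _ fun k _ =>
        Submodule.mem_iSup_of_mem k ⟨fun a => v (k, a), rfl⟩
    · refine iSup_le fun k => ?_
      rintro x ⟨w, rfl⟩
      refine ⟨fun p => if p.1 = k then w p.2 else 0, ?_⟩
      ext c
      simp only [Matrix.mulVecLin_apply, Matrix.mulVec, dotProduct, Matrix.transpose_apply]
      rw [Fintype.sum_prod_type]
      rw [Finset.sum_eq_single k]
      · simp [hN]
      · intro b _ hb
        simp [hb]
      · simp
  have hstack : N.rank = finrank 𝔽 ↥(⨆ k, V k) := by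
    rw [← Matrix.rank_transpose, Matrix.rank, hrange]
  -- V j ≤ V i
  have hle : V j ≤ V i := by
    rintro x ⟨w, rfl⟩
    refine ⟨Aᵀ.mulVec w, ?_⟩
    simp only [Matrix.mulVecLin_apply, Matrix.mulVec_mulVec, hAQ, Matrix.transpose_mul]
  -- the sup is unchanged by removing j
  have habs : (⨆ k, V k) = ⨆ k ∈ (Finset.univ.erase j : Finset (Fin S)), V k := by
    apply le_antisymm
    · refine iSup_le fun k => ?_
      rcases eq_or_ne k j with rfl | hk
      · exact hle.trans (le_iSup₂ (f := fun k _ => V k) i (by simp [hij]))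
      · exact le_iSup₂ (f := fun a _ => V a) k (by simp [hk])
    · exact iSup_le fun k => iSup_le fun _ => le_iSup V k
  -- finrank bound
  have hbound : finrank 𝔽 ↥(⨆ k, V k) ≤ ∑ k ∈ Finset.univ.erase j, finrank 𝔽 (V k) := by
    rw [habs]
    have h1 : (⨆ k ∈ (Finset.univ.erase j : Finset (Fin S)), V k)
        = ⨆ k : (Finset.univ.erase j : Finset (Fin S)), V k.1 := by
      rw [iSup_subtype]
    rw [h1, ← Finset.sum_attach]
    exact aux_finrank_iSup_le _
  -- conclude finrank (V j) = 0
  have hrank' : ∑ k : Fin S, finrank 𝔽 (V k) ≤ ∑ k ∈ Finset.univ.erase j, finrank 𝔽 (V k) := by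
    calc ∑ k : Fin S, finrank 𝔽 (V k) = N.rank := by
          rw [hrank]; exact (Finset.sum_congr rfl fun k _ => (hVrank k)).symm
      _ = finrank 𝔽 ↥(⨆ k, V k) := hstack
      _ ≤ _ := hbound
  have hsum : ∑ k : Fin S, finrank 𝔽 (V k)
      = finrank 𝔽 (V j) + ∑ k ∈ Finset.univ.erase j, finrank 𝔽 (V k) := by
    rw [← Finset.sum_erase_add _ _ (Finset.mem_univ j), add_comm]
  have hzero : finrank 𝔽 (V j) = 0 := by omega
  have hVbot : V j = ⊥ := Submodule.finrank_eq_zero.mp hzero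
  -- hence QI j = 0
  ext k c
  have : (QI j)ᵀ.mulVec (Pi.single k 1) ∈ V j := ⟨Pi.single k 1, rfl⟩
  rw [hVbot, Submodule.mem_bot] at this
  have := congrFun this c
  simpa [Matrix.mulVec_single] using this
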